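/- For α ∈ (0,1), β with Re β ≥ 0, and ρ > 0, for every nonnegative integer k there exists a constant c > 0 such that the k-th derivative of the function m(λ) = (λ² + ρ²)^{-β/2} e^{i(λ²+ρ²)^{α/2}} satisfies |∂^k m(λ)| ≤ c (1 + λ²)^{-k(1-α)/2} for all real λ ≥ 0. -/

import Mathlib

open Complex

/-- norm of real iterated Fréchet derivative of cexp equals |cexp z| -/
lemma norm_iteratedFDeriv_real_cexp (n : ℕ) (z : ℂ) :
    ‖iteratedFDeriv ℝ n Complex.exp z‖ = ‖Complex.exp z‖ := by
  have hiter : iteratedDeriv n Complex.exp = Complex.exp := by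
    induction n with
    | zero => simp
    | succ n ih => rw [iteratedDeriv_succ, ih]; ext z; simp [Complex.deriv_exp]
  have hC : HasFTaylorSeriesUpTo (⊤:ℕ∞) Complex.exp (ftaylorSeries ℂ Complex.exp) :=
    contDiff_iff_ftaylorSeries.mp Complex.contDiff_exp
  have hR : HasFTaylorSeriesUpTo (⊤:ℕ∞) Complex.exp
      (fun x => (ftaylorSeries ℂ Complex.exp x).restrictScalars ℝ) := by
    rw [← hasFTaylorSeriesUpToOn_univ_iff] at hC ⊢
    exact hC.restrictScalars ℝ
  have := (hasFTaylorSeriesUpToOn_univ_iff.mpr hR).eq_iteratedFDerivWithin_of_uniqueDiffOn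
    (m := n) (by exact_mod_cast le_top) uniqueDiffOn_univ (Set.mem_univ z)
  rw [iteratedFDerivWithin_univ] at this
  rw [← this]
  have : ‖(ftaylorSeries ℂ Complex.exp z).restrictScalars ℝ n‖
      = ‖iteratedFDeriv ℂ n Complex.exp z‖ :=
    ContinuousMultilinearMap.norm_restrictScalars _
  rw [this, norm_iteratedFDeriv_eq_norm_iteratedDeriv, hiter]

/-- class of functions of the form ∑ c_j l^{a_j} (l²+ρ²)^{b_j} with a_j + 2 b_j = t -/
def InClass (ρ t : ℝ) (g : ℝ → ℝ) : Prop :=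
  ∃ (ι : Type) (_ : Fintype ι) (c : ι → ℝ) (a : ι → ℕ) (b : ι → ℝ),
    (∀ j, c j ≠ 0 → (a j : ℝ) + 2 * b j = t) ∧
    ∀ l : ℝ, g l = ∑ j, c j * l ^ (a j) * (l ^ 2 + ρ ^ 2) ^ (b j)

lemma xpos {ρ : ℝ} (hρ : 0 < ρ) (l : ℝ) : 0 < l ^ 2 + ρ ^ 2 := by positivity

lemma term_hasDerivAt {ρ : ℝ} (hρ : 0 < ρ) (c : ℝ) (a : ℕ) (b : ℝ) (l : ℝ) :
    HasDerivAt (fun l : ℝ => c * l ^ a * (l ^ 2 + ρ ^ 2) ^ b)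
      (c * (a : ℝ) * l ^ (a - 1) * (l ^ 2 + ρ ^ 2) ^ b
        + 2 * c * b * (l ^ a * l) * (l ^ 2 + ρ ^ 2) ^ (b - 1)) l := by
  have h1 : HasDerivAt (fun l : ℝ => c * l ^ a) (c * ((a : ℝ) * l ^ (a - 1))) l :=
    (hasDerivAt_pow a l).const_mul c
  have hin : HasDerivAt (fun l : ℝ => l ^ 2 + ρ ^ 2) (2 * l) l := by
    simpa using (hasDerivAt_pow 2 l).add_const (ρ ^ 2)
  have h2 : HasDerivAt (fun l : ℝ => (l ^ 2 + ρ ^ 2) ^ b)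
      (2 * l * b * (l ^ 2 + ρ ^ 2) ^ (b - 1)) l :=
    hin.rpow_const (Or.inl (xpos hρ l).ne')
  have := h1.fun_mul h2
  exact this.congr_deriv (by ring)

lemma InClass.deriv {ρ t : ℝ} (hρ : 0 < ρ) {g : ℝ → ℝ} (hg : InClass ρ t g) :
    InClass ρ (t - 1) (deriv g) := by
  obtain ⟨ι, hι, c, a, b, hconstr, hrep⟩ := hg
  refine ⟨ι ⊕ ι, inferInstance,
    Sum.elim (fun j => c j * (a j)) (fun j => 2 * c j * b j),
    Sum.elim (fun j => a j - 1) (fun j => a j + 1),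
    Sum.elim (fun j => b j) (fun j => b j - 1), ?_, ?_⟩
  · rintro (j | j) hc
    · simp only [Sum.elim_inl] at *
      have hcj : c j ≠ 0 := fun h => hc (by simp [h])
      have haj : a j ≠ 0 := fun h => hc (by simp [h])
      have h1 : (1:ℕ) ≤ a j := Nat.one_le_iff_ne_zero.mpr haj
      have := hconstr j hcj
      push_cast [Nat.cast_sub h1]
      linarith
    · simp only [Sum.elim_inr] at *
      have hcj : c j ≠ 0 := fun h => hc (by simp [h])
      have := hconstr j hcj
      push_cast
      linarith
  · intro l
    have hg' : g = fun l => ∑ j, c j * l ^ (a j) * (l ^ 2 + ρ ^ 2) ^ (b j) := funext hrep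
    have hsum : HasDerivAt g
        (∑ j, (c j * (a j : ℝ) * l ^ (a j - 1) * (l ^ 2 + ρ ^ 2) ^ (b j)
          + 2 * c j * b j * (l ^ (a j) * l) * (l ^ 2 + ρ ^ 2) ^ (b j - 1))) l := by
      rw [hg']
      exact HasDerivAt.fun_sum fun j _ => term_hasDerivAt hρ (c j) (a j) (b j) l
    rw [hsum.deriv, Fintype.sum_sum_type]
    simp only [Sum.elim_inl, Sum.elim_inr]
    rw [Finset.sum_add_distrib]
    congr 1

lemma InClass.iteratedDeriv {ρ t : ℝ} (hρ : 0 < ρ) {g : ℝ → ℝ} (hg : InClass ρ t g) (n : ℕ) :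
    InClass ρ (t - n) (iteratedDeriv n g) := by
  induction n with
  | zero => simpa using hg
  | succ n ih =>
    rw [iteratedDeriv_succ]
    have := InClass.deriv hρ ih
    convert this using 1
    push_cast; ring

lemma InClass.bound {ρ t : ℝ} (hρ : 0 < ρ) (ht : t ≤ 0) {g : ℝ → ℝ} (hg : InClass ρ t g) :
    ∃ C : ℝ, 0 < C ∧ ∀ l : ℝ, 0 ≤ l → |g l| ≤ C * (1 + l ^ 2) ^ (t / 2) := by
  obtain ⟨ι, hι, c, a, b, hconstr, hrep⟩ := hg
  set m₀ : ℝ := min 1 (ρ ^ 2) with hm₀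
  have hm₀pos : 0 < m₀ := lt_min one_pos (by positivity)
  refine ⟨(∑ j, |c j|) * m₀ ^ (t / 2) + 1, by positivity, fun l hl => ?_⟩
  have hx : (0:ℝ) < l ^ 2 + ρ ^ 2 := xpos hρ l
  have hbase : m₀ * (1 + l ^ 2) ≤ l ^ 2 + ρ ^ 2 := by
    have h1 : m₀ ≤ 1 := min_le_left _ _
    have h2 : m₀ ≤ ρ ^ 2 := min_le_right _ _
    nlinarith [sq_nonneg l]
  have key : ∀ j, |c j * l ^ (a j) * (l ^ 2 + ρ ^ 2) ^ (b j)|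
      ≤ |c j| * (m₀ ^ (t / 2) * (1 + l ^ 2) ^ (t / 2)) := by
    intro j
    rcases eq_or_ne (c j) 0 with h0 | h0
    · simp only [h0, zero_mul, abs_zero, abs_nonneg]
      positivity
    · have hc := hconstr j h0
      rw [abs_mul, abs_mul, _root_.abs_of_nonneg (pow_nonneg hl _),
        _root_.abs_of_nonneg (Real.rpow_nonneg hx.le _)]
      have step1 : l ^ (a j) ≤ (l ^ 2 + ρ ^ 2) ^ ((a j : ℝ) / 2) := by
        have hl2 : l ≤ (l ^ 2 + ρ ^ 2) ^ ((1:ℝ) / 2) := by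
          rw [← Real.sqrt_eq_rpow]
          have : l = Real.sqrt (l ^ 2) := by
            rw [Real.sqrt_sq hl]
          rw [this]
          · exact Real.sqrt_le_sqrt (by nlinarith)
        calc l ^ (a j) ≤ ((l ^ 2 + ρ ^ 2) ^ ((1:ℝ) / 2)) ^ (a j) :=
              pow_le_pow_left₀ hl hl2 _
          _ = (l ^ 2 + ρ ^ 2) ^ ((a j : ℝ) / 2) := by
              rw [← Real.rpow_natCast ((l ^ 2 + ρ ^ 2) ^ ((1:ℝ)/2)) (a j),
                ← Real.rpow_mul hx.le]
              ring_nf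
      have step2 : l ^ (a j) * (l ^ 2 + ρ ^ 2) ^ (b j) ≤ (l ^ 2 + ρ ^ 2) ^ (t / 2) := by
        calc l ^ (a j) * (l ^ 2 + ρ ^ 2) ^ (b j)
            ≤ (l ^ 2 + ρ ^ 2) ^ ((a j : ℝ) / 2) * (l ^ 2 + ρ ^ 2) ^ (b j) :=
              mul_le_mul_of_nonneg_right step1 (Real.rpow_nonneg hx.le _)
          _ = (l ^ 2 + ρ ^ 2) ^ ((a j : ℝ) / 2 + b j) := (Real.rpow_add hx _ _).symm
          _ = (l ^ 2 + ρ ^ 2) ^ (t / 2) := by rw [show (a j : ℝ) / 2 + b j = t / 2 by linarith]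
      have step3 : (l ^ 2 + ρ ^ 2) ^ (t / 2) ≤ m₀ ^ (t / 2) * (1 + l ^ 2) ^ (t / 2) := by
        rw [← Real.mul_rpow hm₀pos.le (by positivity)]
        exact Real.rpow_le_rpow_of_nonpos (by positivity) hbase (by linarith)
      calc |c j| * (l ^ (a j)) * ((l ^ 2 + ρ ^ 2) ^ (b j))
          ≤ |c j| * ((l ^ 2 + ρ ^ 2) ^ (t / 2)) := by
            rw [mul_assoc]
            exact mul_le_mul_of_nonneg_left step2 (abs_nonneg _)
        _ ≤ |c j| * (m₀ ^ (t / 2) * (1 + l ^ 2) ^ (t / 2)) :=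
            mul_le_mul_of_nonneg_left step3 (abs_nonneg _)
  calc |g l| = |∑ j, c j * l ^ (a j) * (l ^ 2 + ρ ^ 2) ^ (b j)| := by rw [hrep]
    _ ≤ ∑ j, |c j * l ^ (a j) * (l ^ 2 + ρ ^ 2) ^ (b j)| := Finset.abs_sum_le_sum_abs _ _
    _ ≤ ∑ j, |c j| * (m₀ ^ (t / 2) * (1 + l ^ 2) ^ (t / 2)) :=
        Finset.sum_le_sum fun j _ => key j
    _ = (∑ j, |c j|) * m₀ ^ (t / 2) * (1 + l ^ 2) ^ (t / 2) := by
        rw [← Finset.sum_mul]; ring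
    _ ≤ ((∑ j, |c j|) * m₀ ^ (t / 2) + 1) * (1 + l ^ 2) ^ (t / 2) := by
        have : (0:ℝ) ≤ (1 + l ^ 2) ^ (t / 2) := Real.rpow_nonneg (by positivity) _
        nlinarith

lemma v_mem {ρ α : ℝ} (hρ : 0 < ρ) :
    InClass ρ α (fun l : ℝ => (l ^ 2 + ρ ^ 2) ^ (α / 2)) := by
  refine ⟨Unit, inferInstance, fun _ => 1, fun _ => 0, fun _ => α / 2, ?_, ?_⟩
  · intro j _; push_cast; ring
  · intro l; simp

lemma derivL_mem {ρ : ℝ} (hρ : 0 < ρ) :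
    InClass ρ (-1) (deriv (fun l : ℝ => Real.log (l ^ 2 + ρ ^ 2))) := by
  refine ⟨Unit, inferInstance, fun _ => 2, fun _ => 1, fun _ => -1, ?_, ?_⟩
  · intro j _; push_cast; ring
  · intro l
    have hin : HasDerivAt (fun l : ℝ => l ^ 2 + ρ ^ 2) (2 * l) l := by
      simpa using (hasDerivAt_pow 2 l).add_const (ρ ^ 2)
    have h := hin.log (xpos hρ l).ne'
    rw [h.deriv]
    simp [Real.rpow_neg_one]
    field_simp

noncomputable def LL (ρ : ℝ) : ℝ → ℝ := fun l => Real.log (l ^ 2 + ρ ^ 2)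
noncomputable def vv (ρ α : ℝ) : ℝ → ℝ := fun l => (l ^ 2 + ρ ^ 2) ^ (α / 2)

section F
variable (ρ α : ℝ) (β : ℂ)

/-- the phase/amplitude exponent function -/
noncomputable def ff : ℝ → ℂ := fun l =>
  -(β / 2) * (LL ρ l : ℂ) + Complex.I * (vv ρ α l : ℂ)

variable {ρ α β}

lemma contDiff_L (hρ : 0 < ρ) : ContDiff ℝ (⊤:ℕ∞) (LL ρ) :=
  ((contDiff_id.pow 2).add contDiff_const).log fun l => (xpos hρ l).ne'

lemma contDiff_v (hρ : 0 < ρ) : ContDiff ℝ (⊤:ℕ∞) (vv ρ α) :=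
  ((contDiff_id.pow 2).add contDiff_const).rpow_const_of_ne fun l => (xpos hρ l).ne'

lemma contDiff_ff (hρ : 0 < ρ) : ContDiff ℝ (⊤:ℕ∞) (ff ρ α β) := by
  unfold ff
  exact (contDiff_const.mul (Complex.ofRealCLM.contDiff.comp (contDiff_L hρ))).add
    (contDiff_const.mul (Complex.ofRealCLM.contDiff.comp (contDiff_v hρ)))

lemma m_eq (hρ : 0 < ρ) (l : ℝ) :
    ((l:ℂ) ^ 2 + (ρ:ℂ) ^ 2) ^ (-β / 2) *
      Complex.exp (Complex.I * (((l:ℂ) ^ 2 + (ρ:ℂ) ^ 2) ^ ((α:ℂ) / 2))) =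
    Complex.exp (ff ρ α β l) := by
  have hx : (0:ℝ) < l ^ 2 + ρ ^ 2 := xpos hρ l
  have hcast : (l:ℂ) ^ 2 + (ρ:ℂ) ^ 2 = ((l ^ 2 + ρ ^ 2 : ℝ) : ℂ) := by push_cast; ring
  have hne : ((l ^ 2 + ρ ^ 2 : ℝ) : ℂ) ≠ 0 := by
    exact_mod_cast fun h => hx.ne' (by exact_mod_cast h)
  rw [hcast]
  have h1 : ((l ^ 2 + ρ ^ 2 : ℝ) : ℂ) ^ (-β / 2)
      = Complex.exp (-(β / 2) * (Real.log (l ^ 2 + ρ ^ 2) : ℂ)) := by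
    rw [Complex.cpow_def_of_ne_zero hne, Complex.ofReal_log hx.le]
    ring_nf
  have h2 : ((l ^ 2 + ρ ^ 2 : ℝ) : ℂ) ^ ((α:ℂ) / 2)
      = (((l ^ 2 + ρ ^ 2) ^ (α / 2) : ℝ) : ℂ) := by
    rw [Complex.ofReal_cpow hx.le]
    norm_num
  rw [h1, h2, ff, Complex.exp_add]
  rfl

lemma iteratedDeriv_ff (hρ : 0 < ρ) (j : ℕ) (l : ℝ) :
    iteratedDeriv j (ff ρ α β) l =
      -(β / 2) * ((iteratedDeriv j (LL ρ) l : ℝ) : ℂ)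
      + Complex.I * ((iteratedDeriv j (vv ρ α) l : ℝ) : ℂ) := by
  induction j generalizing l with
  | zero => simp [ff]
  | succ j ih =>
    rw [iteratedDeriv_succ]
    have hfun : iteratedDeriv j (ff ρ α β) = fun l =>
        -(β / 2) * ((iteratedDeriv j (LL ρ) l : ℝ) : ℂ)
        + Complex.I * ((iteratedDeriv j (vv ρ α) l : ℝ) : ℂ) := funext ih
    rw [hfun]
    have hL : HasDerivAt (iteratedDeriv j (LL ρ))
        (iteratedDeriv (j + 1) (LL ρ) l) l := by
      rw [iteratedDeriv_succ]
      exact (((contDiff_L hρ).differentiable_iteratedDeriv j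
        (by exact_mod_cast WithTop.coe_lt_top _)) l).hasDerivAt
    have hv : HasDerivAt (iteratedDeriv j (vv ρ α))
        (iteratedDeriv (j + 1) (vv ρ α) l) l := by
      rw [iteratedDeriv_succ]
      exact (((contDiff_v hρ).differentiable_iteratedDeriv j
        (by exact_mod_cast WithTop.coe_lt_top _)) l).hasDerivAt
    have H : HasDerivAt (fun l : ℝ =>
        -(β / 2) * ((iteratedDeriv j (LL ρ) l : ℝ) : ℂ)
        + Complex.I * ((iteratedDeriv j (vv ρ α) l : ℝ) : ℂ))
        (-(β / 2) * ((iteratedDeriv (j + 1) (LL ρ) l : ℝ) : ℂ)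
        + Complex.I * ((iteratedDeriv (j + 1) (vv ρ α) l : ℝ) : ℂ)) l :=
      (hL.ofReal_comp.const_mul _).add (hv.ofReal_comp.const_mul _)
    exact H.deriv
end F

lemma ff_deriv_bound {ρ α : ℝ} {β : ℂ} (hρ : 0 < ρ) (hα : α ∈ Set.Ioo (0:ℝ) 1)
    (j : ℕ) (hj : 1 ≤ j) :
    ∃ C : ℝ, 0 < C ∧ ∀ l : ℝ, 0 ≤ l →
      ‖iteratedDeriv j (ff ρ α β) l‖ ≤ C * (1 + l ^ 2) ^ ((α - j) / 2) := by
  obtain ⟨i, rfl⟩ : ∃ i, j = i + 1 := ⟨j - 1, (Nat.succ_pred_eq_of_pos hj).symm⟩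
  -- bound for L-part
  have hLclass : InClass ρ (-1 - i) (iteratedDeriv (i + 1) (LL ρ)) := by
    have := (derivL_mem hρ).iteratedDeriv hρ i
    rw [← iteratedDeriv_succ'] at this
    exact this
  obtain ⟨CL, hCLpos, hCL⟩ := hLclass.bound hρ (by push_cast; linarith [Nat.cast_nonneg (α := ℝ) i])
  -- bound for v-part
  have hvclass : InClass ρ (α - (i + 1 : ℕ)) (iteratedDeriv (i + 1) (vv ρ α)) :=
    (v_mem hρ).iteratedDeriv hρ (i + 1)
  have hα1 : α < 1 := hα.2
  have hα0 : 0 < α := hα.1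
  obtain ⟨Cv, hCvpos, hCv⟩ := hvclass.bound hρ (by push_cast; linarith [Nat.cast_nonneg (α := ℝ) i])
  refine ⟨‖β / 2‖ * CL + Cv, by positivity, fun l hl => ?_⟩
  have hbase1 : (1:ℝ) ≤ 1 + l ^ 2 := by nlinarith
  have hLle : |iteratedDeriv (i + 1) (LL ρ) l| ≤ CL * (1 + l ^ 2) ^ ((α - (i + 1 : ℕ)) / 2) := by
    refine (hCL l hl).trans ?_
    refine mul_le_mul_of_nonneg_left ?_ hCLpos.le
    apply Real.rpow_le_rpow_of_exponent_le hbase1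
    push_cast; linarith
  have hvle := hCv l hl
  calc ‖iteratedDeriv (i + 1) (ff ρ α β) l‖
      = ‖-(β / 2) * ((iteratedDeriv (i + 1) (LL ρ) l : ℝ) : ℂ)
        + Complex.I * ((iteratedDeriv (i + 1) (vv ρ α) l : ℝ) : ℂ)‖ := by
        rw [iteratedDeriv_ff hρ]
    _ ≤ ‖-(β / 2) * ((iteratedDeriv (i + 1) (LL ρ) l : ℝ) : ℂ)‖
        + ‖Complex.I * ((iteratedDeriv (i + 1) (vv ρ α) l : ℝ) : ℂ)‖ := norm_add_le _ _
    _ = ‖β / 2‖ * |iteratedDeriv (i + 1) (LL ρ) l| + |iteratedDeriv (i + 1) (vv ρ α) l| := by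
        rw [norm_mul, norm_mul, norm_neg, Complex.norm_I, one_mul, Complex.norm_real,
          Complex.norm_real]
        rfl
    _ ≤ ‖β / 2‖ * (CL * (1 + l ^ 2) ^ ((α - (i + 1 : ℕ)) / 2))
        + Cv * (1 + l ^ 2) ^ ((α - (i + 1 : ℕ)) / 2) := by
        gcongr
    _ = (‖β / 2‖ * CL + Cv) * (1 + l ^ 2) ^ ((α - (i + 1 : ℕ)) / 2) := by ring

theorem stmt_0 (α : ℝ) (hα : α ∈ Set.Ioo (0:ℝ) 1) (β : ℂ) (hβ : 0 ≤ β.re)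
    (ρ : ℝ) (hρ : 0 < ρ) (m : ℝ → ℂ)
    (hm : ∀ l : ℝ, m l = ((l:ℂ)^2 + (ρ:ℂ)^2) ^ (-β/2) *
      Complex.exp (Complex.I * (((l:ℂ)^2 + (ρ:ℂ)^2) ^ ((α:ℂ)/2)))) :
    ∀ k : ℕ, ∃ c : ℝ, 0 < c ∧ ∀ l : ℝ, 0 ≤ l →
      ‖iteratedDeriv k m l‖ ≤ c * (1 + l^2) ^ (-((k:ℝ) * (1 - α)) / 2) := by
  intro k
  have hα0 : 0 < α := hα.1
  have hα1 : α < 1 := hα.2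
  have hmf : m = Complex.exp ∘ ff ρ α β := by
    funext l
    rw [hm l, Function.comp_apply, ← m_eq hρ l]
  -- uniform bound for the derivatives of cexp along ff
  set C : ℝ := Real.exp (β.re / 2 * |Real.log (ρ ^ 2)|) with hCdef
  have hCpos : 0 < C := Real.exp_pos _
  have hre : ∀ l : ℝ, (ff ρ α β l).re = -(β.re / 2) * Real.log (l ^ 2 + ρ ^ 2) := by
    intro l
    have h2 : (β / 2).re = β.re / 2 := by
      rw [show (2:ℂ) = ((2:ℝ):ℂ) by norm_num, Complex.div_ofReal_re]
    simp [ff, Complex.add_re, Complex.mul_re, h2, LL]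
  have hexp : ∀ l : ℝ, ‖Complex.exp (ff ρ α β l)‖ ≤ C := by
    intro l
    rw [Complex.norm_exp, hre l]
    apply Real.exp_le_exp.mpr
    have hlog : Real.log (ρ ^ 2) ≤ Real.log (l ^ 2 + ρ ^ 2) :=
      Real.log_le_log (by positivity) (by nlinarith)
    have h1 := neg_abs_le (Real.log (ρ ^ 2))
    nlinarith
  have hC : ∀ i, i ≤ k → ∀ l : ℝ, ‖iteratedFDeriv ℝ i Complex.exp (ff ρ α β l)‖ ≤ C := by
    intro i _ l
    rw [norm_iteratedFDeriv_real_cexp]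
    exact hexp l
  -- uniform constant K for the derivatives of ff
  have hCj : ∀ j : ℕ, ∃ Cf : ℝ, 0 < Cf ∧ ∀ l : ℝ, 0 ≤ l →
      ‖iteratedDeriv (j + 1) (ff ρ α β) l‖ ≤ Cf * (1 + l ^ 2) ^ ((α - (j + 1 : ℕ)) / 2) :=
    fun j => ff_deriv_bound hρ hα (j + 1) (by omega)
  choose Cf hCfpos hCf using hCj
  set K : ℝ := 1 + ∑ i ∈ Finset.range k, Cf i with hKdef
  have hK1 : 1 ≤ K := le_add_of_nonneg_right (Finset.sum_nonneg fun i _ => (hCfpos i).le)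
  have hKj : ∀ j, 1 ≤ j → j ≤ k → ∀ l : ℝ, 0 ≤ l →
      ‖iteratedDeriv j (ff ρ α β) l‖ ≤ K * (1 + l ^ 2) ^ ((α - j) / 2) := by
    intro j hj1 hjk l hl
    obtain ⟨i, rfl⟩ : ∃ i, j = i + 1 := ⟨j - 1, (Nat.succ_pred_eq_of_pos hj1).symm⟩
    have hle : Cf i ≤ K := by
      rw [hKdef]
      have : Cf i ≤ ∑ i ∈ Finset.range k, Cf i :=
        Finset.single_le_sum (fun i _ => (hCfpos i).le) (Finset.mem_range.mpr (by omega))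
      linarith
    refine (hCf i l hl).trans ?_
    exact mul_le_mul_of_nonneg_right hle (Real.rpow_nonneg (by positivity) _)
  refine ⟨(k.factorial : ℝ) * C * K ^ k, by positivity, fun l hl => ?_⟩
  have hbase1 : (1:ℝ) ≤ 1 + l ^ 2 := by nlinarith
  set D : ℝ := K * (1 + l ^ 2) ^ (-(1 - α) / 2) with hDdef
  have hD : ∀ i, 1 ≤ i → i ≤ k → ‖iteratedFDeriv ℝ i (ff ρ α β) l‖ ≤ D ^ i := by
    intro i hi1 hik
    rw [norm_iteratedFDeriv_eq_norm_iteratedDeriv]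
    refine (hKj i hi1 hik l hl).trans ?_
    have hexpo : (α - i) / 2 ≤ -(1 - α) / 2 * i := by
      have : (1:ℝ) ≤ i := by exact_mod_cast hi1
      nlinarith
    calc K * (1 + l ^ 2) ^ ((α - i) / 2)
        ≤ K ^ i * (1 + l ^ 2) ^ (-(1 - α) / 2 * i) := by
          apply mul_le_mul (le_self_pow₀ hK1 (by omega))
            (Real.rpow_le_rpow_of_exponent_le hbase1 hexpo)
            (Real.rpow_nonneg (by positivity) _) (by positivity)
      _ = D ^ i := by
          rw [hDdef, mul_pow, ← Real.rpow_natCast ((1 + l ^ 2) ^ (-(1 - α) / 2)) i,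
            ← Real.rpow_mul (by positivity)]
  have hcomp := norm_iteratedFDeriv_comp_le (𝕜 := ℝ) (g := Complex.exp) (f := ff ρ α β)
    (n := k) (N := (⊤:ℕ∞)) ((Complex.contDiff_exp : ContDiff ℂ (⊤:ℕ∞) Complex.exp).restrict_scalars ℝ) (contDiff_ff hρ)
    (by exact_mod_cast le_top) l (fun i hi => hC i hi l) hD
  have hfinal : ‖iteratedDeriv k m l‖ ≤ (k.factorial : ℝ) * C * D ^ k := by
    rw [← norm_iteratedFDeriv_eq_norm_iteratedDeriv, hmf]
    exact hcomp
  refine hfinal.trans (le_of_eq ?_)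
  rw [hDdef, mul_pow, ← Real.rpow_natCast ((1 + l ^ 2) ^ (-(1 - α) / 2)) k,
    ← Real.rpow_mul (by positivity)]
  rw [show -(1 - α) / 2 * k = -((k:ℝ) * (1 - α)) / 2 by ring]
  ring
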